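/- Let h : ℝⁿ → ℝ ∪ {+∞}, x̄ ∈ dom h, K ⊆ ℝⁿ, β > 0, γ ≥ 0. For every d in the tangent cone T(K, x̄), every λ ∈ [0,1], and every w ∈ ∂^{K}_{β,γ} h(x̄), one has λ⟨w, d⟩ ≤ β · max{h^{H+}(x̄; d), 0}, where h^{H+}(x̄; d) := limsup_{t→0⁺, d'→d} (h(x̄ + t d') − h(x̄))/t is the upper Hadamard directional derivative. -/
import Mathlib


open RealInnerProductSpace Set Filter Topology

variable {E : Type*} [NormedAddCommGroup E] [InnerProductSpace ℝ E]

/-- The `(β, γ, K)`-strong subdifferential of `h` at `x`. -/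
def strongSubdiff (h : E → EReal) (K : Set E) (β γ : ℝ) (x : E) : Set E :=
  {ξ | ∀ y ∈ K, ∀ l ∈ Icc (0:ℝ) 1,
    h x + (((l / β) * ⟪ξ, y - x⟫
      + (l / 2) * (γ - l / β - l * γ) * ‖y - x‖ ^ 2 : ℝ) : EReal)
      ≤ max (h y) (h x)}

/-- The (Bouligand) tangent cone `T(K, x)`. -/
def tangentConeP (K : Set E) (x : E) : Set E :=
  {d | ∃ (t : ℕ → ℝ) (ds : ℕ → E),
    (∀ n, 0 < t n) ∧ Tendsto t atTop (nhds 0) ∧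
    Tendsto ds atTop (nhds d) ∧ ∀ n, x + t n • ds n ∈ K}

/-- The upper Hadamard directional derivative of `h` at `x` in direction `d`. -/
noncomputable def hadamardDeriv (h : E → EReal) (x : E) (d : E) : EReal :=
  Filter.limsup (fun p : ℝ × E => ((p.1⁻¹ : ℝ) : EReal) * (h (x + p.1 • p.2) - h x))
    ((nhdsWithin (0:ℝ) (Ioi 0)) ×ˢ nhds d)

theorem strongSubdiff_le_hadamard
    (h : E → EReal) (hproper : ∀ x, h x ≠ ⊥)
    (K : Set E) (β γ : ℝ) (hβ : 0 < β) (hγ : 0 ≤ γ)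
    (xb : E) (hdom : h xb ≠ ⊤)
    (d : E) (hd : d ∈ tangentConeP K xb) :
    ∀ l ∈ Icc (0:ℝ) 1, ∀ w ∈ strongSubdiff h K β γ xb,
      ((l * ⟪w, d⟫ : ℝ) : EReal) ≤ ((β : ℝ) : EReal) * max (hadamardDeriv h xb d) 0 := by
  obtain ⟨t, ds, htpos, ht0, hdsd, hK⟩ := hd
  intro l hl w hw
  obtain ⟨hx, hhx⟩ : ∃ r : ℝ, h xb = (r : EReal) :=
    ⟨(h xb).toReal, (EReal.coe_toReal hdom (hproper xb)).symm⟩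
  set f : ℝ × E → EReal :=
    fun p => ((p.1⁻¹ : ℝ) : EReal) * (h (xb + p.1 • p.2) - h xb) with hf
  set c : ℝ := (l / 2) * (γ - l / β - l * γ) with hc
  set r : ℕ → ℝ := fun n => (l / β) * ⟪w, ds n⟫ + c * t n * ‖ds n‖ ^ 2 with hr
  -- key pointwise inequality
  have key : ∀ n, ((r n : ℝ) : EReal) ≤ max (f (t n, ds n)) 0 := by
    intro n
    have h1 := hw (xb + t n • ds n) (hK n) l hl
    have hy : xb + t n • ds n - xb = t n • ds n := by abel
    rw [hy] at h1
    have hnorm : ‖t n • ds n‖ ^ 2 = t n ^ 2 * ‖ds n‖ ^ 2 := by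
      rw [norm_smul, mul_pow, Real.norm_eq_abs, sq_abs]
    have hinner : ⟪w, t n • ds n⟫ = t n * ⟪w, ds n⟫ := real_inner_smul_right w (ds n) (t n)
    have harg : (l / β) * ⟪w, t n • ds n⟫
        + (l / 2) * (γ - l / β - l * γ) * ‖t n • ds n‖ ^ 2 = t n * r n := by
      rw [hinner, hnorm, hr, hc]; ring
    rw [harg] at h1
    rcases le_or_gt (h (xb + t n • ds n)) (h xb) with hcase | hcase
    · rw [max_eq_right hcase, hhx] at h1
      have : ((hx + t n * r n : ℝ) : EReal) ≤ ((hx : ℝ) : EReal) := by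
        rw [EReal.coe_add]; exact h1
      have h2 : t n * r n ≤ 0 := by
        have := EReal.coe_le_coe_iff.1 this; linarith
      have h3 : r n ≤ 0 := nonpos_of_mul_nonpos_right h2 (htpos n)
      calc ((r n : ℝ) : EReal) ≤ (0 : EReal) := by exact_mod_cast h3
        _ ≤ max (f (t n, ds n)) 0 := le_max_right _ _
    · rw [max_eq_left hcase.le, hhx] at h1
      have h2 : ((t n * r n : ℝ) : EReal) ≤ h (xb + t n • ds n) - h xb := by
        rw [hhx]
        rw [EReal.le_sub_iff_add_le (Or.inl (EReal.coe_ne_bot hx))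
          (Or.inl (EReal.coe_ne_top hx)), add_comm]
        exact h1
      have h3 : (((t n)⁻¹ : ℝ) : EReal) * ((t n * r n : ℝ) : EReal)
          ≤ (((t n)⁻¹ : ℝ) : EReal) * (h (xb + t n • ds n) - h xb) :=
        mul_le_mul_of_nonneg_left h2 (by exact_mod_cast (inv_nonneg.2 (htpos n).le))
      have h4 : (((t n)⁻¹ : ℝ) : EReal) * ((t n * r n : ℝ) : EReal) = ((r n : ℝ) : EReal) := by
        rw [← EReal.coe_mul]
        congr 1
        exact inv_mul_cancel_left₀ (htpos n).ne' _
      calc ((r n : ℝ) : EReal) ≤ f (t n, ds n) := by rw [← h4]; exact h3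
        _ ≤ max (f (t n, ds n)) 0 := le_max_left _ _
  -- limit of r
  have hrlim : Tendsto r atTop (nhds ((l / β) * ⟪w, d⟫)) := by
    have h1 : Tendsto (fun n => ⟪w, ds n⟫) atTop (nhds ⟪w, d⟫) :=
      ((continuous_const.inner continuous_id).tendsto d).comp hdsd
    have h2 : Tendsto (fun n => ‖ds n‖ ^ 2) atTop (nhds (‖d‖ ^ 2)) :=
      ((continuous_id.norm.pow 2).tendsto d).comp hdsd
    have := (h1.const_mul (l / β)).add (((ht0.const_mul c).mul h2))
    simpa using this
  -- filters
  set F : Filter (ℝ × E) := (nhdsWithin (0:ℝ) (Ioi 0)) ×ˢ nhds d with hF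
  have htu : Tendsto (fun n => (t n, ds n)) atTop F := by
    refine Tendsto.prodMk ?_ hdsd
    exact tendsto_nhdsWithin_of_tendsto_nhds_of_eventually_within _ ht0
      (Eventually.of_forall (fun n => htpos n))
  have hFne : F.NeBot := by infer_instance
  have hle : ((((l / β) * ⟪w, d⟫ : ℝ)) : EReal) ≤ max (hadamardDeriv h xb d) 0 := by
    have hcoelim : Tendsto (fun n => ((r n : ℝ) : EReal)) atTop
        (nhds (((l / β) * ⟪w, d⟫ : ℝ) : EReal)) := EReal.tendsto_coe.2 hrlim
    calc (((l / β) * ⟪w, d⟫ : ℝ) : EReal)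
        = limsup (fun n => ((r n : ℝ) : EReal)) atTop := hcoelim.limsup_eq.symm
      _ ≤ limsup (fun n => max (f (t n, ds n)) 0) atTop :=
          limsup_le_limsup (Eventually.of_forall key)
      _ = limsup (fun p => max (f p) 0) (map (fun n => (t n, ds n)) atTop) := by
          rw [limsup, limsup, map_map]; rfl
      _ ≤ limsup (fun p => max (f p) 0) F := limsup_le_limsup_of_le htu
      _ = max (limsup f F) (limsup (fun _ => (0:EReal)) F) := limsup_max
      _ = max (hadamardDeriv h xb d) 0 := by rw [limsup_const]; rfl
  have hmul := mul_le_mul_of_nonneg_left hle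
    (by exact_mod_cast hβ.le : (0:EReal) ≤ ((β : ℝ) : EReal))
  calc ((l * ⟪w, d⟫ : ℝ) : EReal)
      = ((β : ℝ) : EReal) * (((l / β) * ⟪w, d⟫ : ℝ) : EReal) := by
        rw [← EReal.coe_mul]; congr 1; field_simp
    _ ≤ ((β : ℝ) : EReal) * max (hadamardDeriv h xb d) 0 := hmul
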